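/- arXiv:1310.5487 — 6 statements merged into one kernel-verified Lean document; each statement's English description precedes it below -/
import Mathlib

section
/- Let K be a simplicial complex on [m] with K ≠ Δ_[m], and let J ⊆ [m] with J ∉ K. Then the Alexander dual of the full subcomplex K_J equals the link of [m]\J in K^∧: (K_J)^∧ = link_{K^∧}([m]\J). -/
/-- The Alexander dual of a simplicial complex `L` with respect to the vertex set `V`:
`{J ⊆ V : V \ J ∉ L}`. -/
def alexDualOn {m : ℕ} (V : Finset (Fin m)) (L : Set (Finset (Fin m))) :
    Set (Finset (Fin m)) :=
  {J | J ⊆ V ∧ V \ J ∉ L}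

/-- The link of a simplex `I` in `K`: `{J ⊆ [m] \ I : I ∪ J ∈ K}`. -/
def simpLink {m : ℕ} (K : Set (Finset (Fin m))) (I : Finset (Fin m)) :
    Set (Finset (Fin m)) :=
  {J | J ⊆ Iᶜ ∧ I ∪ J ∈ K}

/-- The full subcomplex of `K` on a vertex set `S`. -/
def fullSub {m : ℕ} (K : Set (Finset (Fin m))) (S : Finset (Fin m)) :
    Set (Finset (Fin m)) :=
  {J ∈ K | J ⊆ S}

/-- For a simplicial complex `K ≠ Δ_[m]` on `[m]` and `J ∉ K`,
the Alexander dual (on vertex set `J`) of the full subcomplex `K_J` equals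
the link of `[m] \ J` in `K^∧`. -/
theorem alexDual_fullSub_eq_link {m : ℕ} (K : Set (Finset (Fin m)))
    (hcomplex : ∀ I ∈ K, ∀ J ⊆ I, J ∈ K)
    (hne : K ≠ Set.univ)
    (J : Finset (Fin m)) (hJ : J ∉ K) :
    alexDualOn J (fullSub K J) = simpLink (alexDualOn Finset.univ K) Jᶜ := by
  have key : ∀ A : Finset (Fin m), Finset.univ \ (Jᶜ ∪ A) = J \ A := by
    intro A; ext x; simp [Finset.mem_sdiff, not_or]
  ext A
  simp only [alexDualOn, simpLink, fullSub, Set.mem_setOf_eq, Set.mem_sep_iff,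
    compl_compl, Finset.subset_univ, true_and, key]
  constructor
  · rintro ⟨hA, h⟩
    exact ⟨hA, fun hk => h ⟨hk, Finset.sdiff_subset⟩⟩
  · rintro ⟨hA, h⟩
    exact ⟨hA, fun hk => h hk.1⟩
end

section
/- Let X ⊂ S^r be a finite set with ⋃_{x∈X} H(x) = S^r. Then 0 lies in the interior of the convex hull of X in R^{r+1}. Conversely, if 0 is in the interior of conv(X), then the open hemispheres H(x), x ∈ X, cover S^r. -/
open scoped RealInnerProductSpace

/-- For a finite set `X ⊂ S^r`, the open hemispheres `H(x)`, `x ∈ X`, cover the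
sphere `S^r` if and only if `0` lies in the interior of the convex hull of `X`. -/
theorem hemi_cover_iff_zero_mem_interior {r : ℕ}
    (X : Finset (EuclideanSpace ℝ (Fin (r + 1))))
    (hX : ∀ x ∈ X, ‖x‖ = 1) :
    (∀ y : EuclideanSpace ℝ (Fin (r + 1)), ‖y‖ = 1 → ∃ x ∈ X, 0 < ⟪x, y⟫) ↔
      (0 : EuclideanSpace ℝ (Fin (r + 1))) ∈
        interior (convexHull ℝ (X : Set (EuclideanSpace ℝ (Fin (r + 1))))) := by
  constructor
  · intro hcov
    -- X is nonempty
    have hy1 : ‖(EuclideanSpace.single 0 1 : EuclideanSpace ℝ (Fin (r + 1)))‖ = 1 := by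
      simp [EuclideanSpace.norm_single]
    obtain ⟨x₀, hx₀X, -⟩ := hcov _ hy1
    have hne : X.Nonempty := ⟨x₀, hx₀X⟩
    -- continuous function G y = max_{x∈X} ⟪x,y⟫
    set G : EuclideanSpace ℝ (Fin (r + 1)) → ℝ := fun y => X.sup' hne (fun x => ⟪x, y⟫) with hG
    have hGc : Continuous G := by
      apply Continuous.finset_sup'_apply hne
      intro x _
      exact continuous_const.inner continuous_id
    -- min of G on the sphere
    have hScomp : IsCompact (Metric.sphere (0 : EuclideanSpace ℝ (Fin (r + 1))) 1) := isCompact_sphere _ _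
    have hSne : (Metric.sphere (0 : EuclideanSpace ℝ (Fin (r + 1))) 1).Nonempty := ⟨_, mem_sphere_zero_iff_norm.mpr hy1⟩
    obtain ⟨y₀, hy₀S, hy₀min⟩ := hScomp.exists_isMinOn hSne hGc.continuousOn
    have hy₀1 : ‖y₀‖ = 1 := by simpa using hy₀S
    obtain ⟨x₁, hx₁X, hx₁pos⟩ := hcov y₀ hy₀1
    have hε : 0 < G y₀ := lt_of_lt_of_le hx₁pos (Finset.le_sup' (fun x => ⟪x, y₀⟫) hx₁X)
    set ε := G y₀
    -- claim ball 0 ε ⊆ conv X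
    have hball : Metric.ball (0 : EuclideanSpace ℝ (Fin (r + 1))) ε ⊆ convexHull ℝ (X : Set (EuclideanSpace ℝ (Fin (r + 1)))) := by
      intro v hv
      by_contra hvnot
      obtain ⟨f, u, hfu, huv⟩ := geometric_hahn_banach_closed_point
        (convex_convexHull ℝ (X : Set (EuclideanSpace ℝ (Fin (r + 1)))))
        ((X.finite_toSet.isCompact_convexHull (𝕜 := ℝ)).isClosed) hvnot
      -- translate f to a vector w
      set w := (InnerProductSpace.toDual ℝ (EuclideanSpace ℝ (Fin (r + 1)))).symm f with hw
      have hfw : ∀ z : EuclideanSpace ℝ (Fin (r + 1)), ⟪w, z⟫ = f z := fun z =>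
        InnerProductSpace.toDual_symm_apply
      have hw0 : w ≠ 0 := by
        intro h
        have h1 : f x₁ < u := hfu _ (subset_convexHull ℝ _ hx₁X)
        have h2 : f x₁ = 0 := by rw [← hfw]; simp [h]
        have h3 : f v = 0 := by rw [← hfw]; simp [h]
        linarith
      set y := ‖w‖⁻¹ • w with hy
      have hwpos : (0:ℝ) < ‖w‖ := norm_pos_iff.mpr hw0
      have hy1' : ‖y‖ = 1 := by
        rw [hy, norm_smul, norm_inv, norm_norm, inv_mul_cancel₀ hwpos.ne']
      have hyS : y ∈ Metric.sphere (0 : EuclideanSpace ℝ (Fin (r + 1))) 1 := by simpa using hy1'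
      have key : G y < ε := by
        rw [hG, Finset.sup'_lt_iff]
        intro x hx
        have h1 : f x < u := hfu _ (subset_convexHull ℝ _ hx)
        have h2 : ⟪x, y⟫ = ‖w‖⁻¹ * f x := by
          rw [hy, real_inner_smul_right, real_inner_comm, hfw]
        have h3 : ⟪v, y⟫ = ‖w‖⁻¹ * f v := by
          rw [hy, real_inner_smul_right, real_inner_comm, hfw]
        have h4 : ⟪v, y⟫ ≤ ‖v‖ := by
          calc ⟪v, y⟫ ≤ ‖v‖ * ‖y‖ := real_inner_le_norm v y
          _ = ‖v‖ := by rw [hy1', mul_one]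
        have h5 : ‖v‖ < ε := by simpa using hv
        have h6 : ‖w‖⁻¹ * f x < ‖w‖⁻¹ * f v := by
          apply mul_lt_mul_of_pos_left _ (inv_pos.mpr hwpos)
          linarith
        rw [h2]; linarith [h3 ▸ h4]
      exact absurd (hy₀min hyS) (not_le.mpr key)
    exact mem_interior.mpr ⟨Metric.ball 0 ε, hball, Metric.isOpen_ball,
      Metric.mem_ball_self hε⟩
  · intro hint y hy1
    by_contra hno
    push_neg at hno
    obtain ⟨ε, hε, hball⟩ := Metric.mem_nhds_iff.mp (mem_interior_iff_mem_nhds.mp hint)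
    have hconv : convexHull ℝ (X : Set (EuclideanSpace ℝ (Fin (r + 1)))) ⊆ {z : EuclideanSpace ℝ (Fin (r + 1)) | ⟪z, y⟫ ≤ 0} := by
      apply convexHull_min
      · intro x hx
        exact hno x hx
      · exact convex_halfSpace_le
          ⟨fun a b => inner_add_left a b y, fun c a => real_inner_smul_left a y c⟩ 0
    have hv : (ε / 2) • y ∈ Metric.ball (0 : EuclideanSpace ℝ (Fin (r + 1))) ε := by
      simp only [Metric.mem_ball, dist_zero_right, norm_smul, hy1, mul_one]
      rw [Real.norm_eq_abs, abs_of_pos (by linarith)]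
      linarith
    have hvX : (ε / 2) • y ∈ convexHull ℝ (X : Set (EuclideanSpace ℝ (Fin (r + 1)))) := hball hv
    have := hconv hvX
    simp only [Set.mem_setOf_eq, real_inner_smul_left] at this
    rw [real_inner_self_eq_norm_sq, hy1] at this
    nlinarith
end

section
/- Call a multiset X ⊂ S^r ∪ {0} nondegenerate if for each J with 0 ∈ conv(X(J)) one has span(X(J)) = span(X) = R^{r+1}. Then X is nondegenerate if and only if every minimal nonsimplex of the constellation complex Δ(X) has cardinality exactly r + 2. -/
open scoped RealInnerProductSpace

/-- `I` is a simplex of the constellation complex `Δ(X)`: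
`0` is not in the convex hull of the points `x_i`, `i ∈ I`. -/
def constSimplex {r m : ℕ} (x : Fin m → EuclideanSpace ℝ (Fin (r + 1)))
    (I : Finset (Fin m)) : Prop :=
  (0 : EuclideanSpace ℝ (Fin (r + 1))) ∉ convexHull ℝ (x '' (I : Set (Fin m)))

open FiniteDimensional Module

/-- Key lemma: if `I` is a minimal nonsimplex, then its cardinality equals the rank of the
span of `x(I)` plus one. -/
theorem minimal_nonsimplex_card_eq {r m : ℕ}
    (x : Fin m → EuclideanSpace ℝ (Fin (r + 1))) (I : Finset (Fin m))
    (h0 : (0 : EuclideanSpace ℝ (Fin (r + 1))) ∈ convexHull ℝ (x '' (I : Set (Fin m))))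
    (hmin : ∀ J ⊂ I,
      (0 : EuclideanSpace ℝ (Fin (r + 1))) ∉ convexHull ℝ (x '' (J : Set (Fin m)))) :
    I.card = Module.finrank ℝ (Submodule.span ℝ (x '' (I : Set (Fin m)))) + 1 := by
  classical
  let E := EuclideanSpace ℝ (Fin (r + 1))
  set S : Finset E := I.image x with hS
  have hSI : (S : Set E) = x '' (I : Set (Fin m)) := Finset.coe_image
  -- injectivity of x on I
  have hinj : Set.InjOn x (I : Set (Fin m)) := by
    intro i hi j hj hij
    by_contra hne
    have hsub : I.erase j ⊂ I := Finset.erase_ssubset (by exact_mod_cast hj)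
    apply hmin _ hsub
    have himg : x '' (I : Set (Fin m)) ⊆ x '' ((I.erase j : Finset (Fin m)) : Set (Fin m)) := by
      rintro _ ⟨k, hk, rfl⟩
      by_cases hkj : k = j
      · subst hkj
        exact ⟨i, by simp [Finset.mem_erase, hne, (by exact_mod_cast hi : i ∈ I)], hij⟩
      · exact ⟨k, by simp [Finset.mem_erase, hkj, (by exact_mod_cast hk : k ∈ I)], rfl⟩
    exact convexHull_mono himg h0
  -- Carathéodory
  have h0' := h0
  rw [← hSI, convexHull_eq_union] at h0'
  simp only [Set.mem_iUnion] at h0'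
  obtain ⟨t, hts, hai, h0t⟩ := h0'
  -- the pulled-back index set must be all of I
  set I' : Finset (Fin m) := I.filter (fun i => x i ∈ t) with hI'
  have hI'I : I' ⊆ I := Finset.filter_subset _ _
  have htI' : (t : Set E) ⊆ x '' (I' : Set (Fin m)) := by
    intro e het
    obtain ⟨i, hiI, rfl⟩ := (hSI ▸ hts) het
    exact ⟨i, by simp [hI', Finset.mem_filter, (by exact_mod_cast hiI : i ∈ I), (by exact_mod_cast het : x i ∈ t)], rfl⟩
  have hI'eq : I' = I := by
    by_contra hne
    exact hmin I' (lt_of_le_of_ne hI'I hne) (convexHull_mono htI' h0t)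
  have htS : t = S := by
    apply Finset.coe_injective
    refine Set.Subset.antisymm (hSI ▸ hts) ?_
    rw [hSI]
    rintro _ ⟨i, hi, rfl⟩
    have : i ∈ I' := hI'eq ▸ (by exact_mod_cast hi)
    exact (Finset.mem_filter.1 this).2
  subst htS
  -- S is nonempty
  have hSne : S.Nonempty := by
    rcases S.eq_empty_or_nonempty with hS0 | hS0
    · rw [hS0] at h0t; simp at h0t
    · exact hS0
  haveI : Nonempty {e // e ∈ S} := ⟨⟨_, hSne.choose_spec⟩⟩
  -- 0 lies in the affine span of S
  have h0aff : (0 : E) ∈ affineSpan ℝ (S : Set E) :=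
    convexHull_subset_affineSpan _ h0t
  -- vectorSpan = span
  have hvs : vectorSpan ℝ (S : Set E) = Submodule.span ℝ (S : Set E) := by
    apply le_antisymm
    · rw [vectorSpan_def]
      apply Submodule.span_le.2
      rintro v ⟨a, ha, b, hb, rfl⟩
      simpa [vsub_eq_sub] using
        sub_mem (Submodule.subset_span ha) (Submodule.subset_span hb)
    · apply Submodule.span_le.2
      intro e he
      have he' : e ∈ affineSpan ℝ (S : Set E) := subset_affineSpan ℝ _ he
      have := AffineSubspace.vsub_mem_direction he' h0aff
      rw [direction_affineSpan] at this
      simpa using this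
  -- conclude via the affine independent card computation
  have hcard := hai.finrank_vectorSpan_add_one
  have h1 : vectorSpan ℝ (Set.range (Subtype.val : {e // e ∈ S} → E)) =
      Submodule.span ℝ (x '' (I : Set (Fin m))) := by
    rw [Subtype.range_coe_subtype, Finset.setOf_mem, hvs, hSI]
  rw [h1, Fintype.card_coe] at hcard
  have hIS : I.card = S.card := (Finset.card_image_of_injOn hinj).symm
  rw [hIS, ← hcard]

/-- A configuration `X ⊂ S^r ∪ {0}` spanning `ℝ^{r+1}` is nondegenerate
(whenever `0 ∈ conv X(J)`, the set `X(J)` spans `ℝ^{r+1}`) if and only if every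
minimal nonsimplex of its constellation complex `Δ(X)` has cardinality exactly `r + 2`. -/
theorem nondegenerate_iff_minimal_nonsimplex_card {r m : ℕ}
    (x : Fin m → EuclideanSpace ℝ (Fin (r + 1)))
    (hx : ∀ i, ‖x i‖ = 1 ∨ x i = 0)
    (hspan : Submodule.span ℝ (Set.range x) = ⊤) :
    (∀ J : Finset (Fin m),
        (0 : EuclideanSpace ℝ (Fin (r + 1))) ∈ convexHull ℝ (x '' (J : Set (Fin m))) →
        Submodule.span ℝ (x '' (J : Set (Fin m))) = ⊤) ↔
      (∀ I : Finset (Fin m), ¬ constSimplex x I → (∀ J ⊂ I, constSimplex x J) →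
        I.card = r + 2) := by
  classical
  let E := EuclideanSpace ℝ (Fin (r + 1))
  have hfr : Module.finrank ℝ E = r + 1 := finrank_euclideanSpace_fin
  constructor
  · intro h I hns hmin
    rw [constSimplex, not_not] at hns
    have hmin' : ∀ J ⊂ I, (0 : E) ∉ convexHull ℝ (x '' (J : Set (Fin m))) :=
      fun J hJ => hmin J hJ
    have hkey := minimal_nonsimplex_card_eq x I hns hmin'
    rw [h I hns] at hkey
    rw [hkey, finrank_top, hfr]
  · intro h J h0J
    -- find a minimal nonsimplex inside J
    obtain ⟨I, hImem, hIminc⟩ := Finset.exists_min_image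
      ((J.powerset).filter (fun K : Finset (Fin m) => (0 : E) ∈ convexHull ℝ (x '' (K : Set (Fin m)))))
      Finset.card ⟨J, by simp [Finset.mem_filter, h0J]⟩
    rw [Finset.mem_filter, Finset.mem_powerset] at hImem
    obtain ⟨hIJ, h0I⟩ := hImem
    have hmin : ∀ K ⊂ I, (0 : E) ∉ convexHull ℝ (x '' (K : Set (Fin m))) := by
      intro K hK h0K
      have hKmem : K ∈ (J.powerset).filter
          (fun K : Finset (Fin m) => (0 : E) ∈ convexHull ℝ (x '' (K : Set (Fin m)))) := by
        rw [Finset.mem_filter, Finset.mem_powerset]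
        exact ⟨hK.subset.trans hIJ, h0K⟩
      exact absurd (hIminc K hKmem) (not_le.2 (Finset.card_lt_card hK))
    have hcard : I.card = r + 2 := h I (by rwa [constSimplex, not_not]) (fun K hK => hmin K hK)
    have hkey := minimal_nonsimplex_card_eq x I h0I hmin
    rw [hcard] at hkey
    have hfrI : Module.finrank ℝ (Submodule.span ℝ (x '' (I : Set (Fin m)))) = r + 1 := by
      omega
    have htop : Submodule.span ℝ (x '' (I : Set (Fin m))) = ⊤ :=
      Submodule.eq_top_of_finrank_eq (by rw [hfrI, hfr])
    rw [eq_top_iff, ← htop]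
    exact Submodule.span_mono (Set.image_mono (f := x) (by exact_mod_cast hIJ))
end

section
/- Let X ⊂ S^r be a finite nondegenerate configuration with ⋃_{x∈X} H(x) = S^r. For any subset I ⊆ [m] with 0 ∈ conv(X(I)), the open hemispheres {H(x_i) : i ∈ I} cover S^r (hence, by the nerve theorem, the full subcomplex Δ(X)_I is homotopy equivalent to S^r). For any I with 0 ∉ conv(X(I)), the full subcomplex Δ(X)_I is the full simplex on I. -/
open scoped RealInnerProductSpace

/-- For a nondegenerate configuration `X ⊂ S^r` whose hemispheres cover `S^r`:
if `0 ∈ conv X(I)` then the hemispheres `H(x_i)`, `i ∈ I`, cover the whole sphere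
(so `Δ(X)_I ≃ S^r` by the nerve theorem); and if `0 ∉ conv X(I)` then every subset
of `I` is a simplex of `Δ(X)`, i.e. `Δ(X)_I` is the full simplex on `I`. -/
theorem constellation_full_subcomplex {r m : ℕ}
    (x : Fin m → EuclideanSpace ℝ (Fin (r + 1)))
    (hx : ∀ i, ‖x i‖ = 1)
    (hcover : ∀ y : EuclideanSpace ℝ (Fin (r + 1)), ‖y‖ = 1 → ∃ i, 0 < ⟪x i, y⟫)
    (hnd : ∀ J : Finset (Fin m),
      (0 : EuclideanSpace ℝ (Fin (r + 1))) ∈ convexHull ℝ (x '' (J : Set (Fin m))) →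
      Submodule.span ℝ (x '' (J : Set (Fin m))) = ⊤) :
    ∀ I : Finset (Fin m),
      ((0 : EuclideanSpace ℝ (Fin (r + 1))) ∈ convexHull ℝ (x '' (I : Set (Fin m))) →
        ∀ y : EuclideanSpace ℝ (Fin (r + 1)), ‖y‖ = 1 → ∃ i ∈ I, 0 < ⟪x i, y⟫) ∧
      ((0 : EuclideanSpace ℝ (Fin (r + 1))) ∉ convexHull ℝ (x '' (I : Set (Fin m))) →
        ∀ J ⊆ I, ∃ y : EuclideanSpace ℝ (Fin (r + 1)), ‖y‖ = 1 ∧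
          ∀ i ∈ J, 0 < ⟪x i, y⟫) := by
  intro I
  classical
  constructor
  · -- covering part
    intro h0 y hy
    by_contra hc
    push_neg at hc
    rw [← Finset.coe_image, Finset.convexHull_eq] at h0
    obtain ⟨w, hw0, hw1, hwc⟩ := h0
    rw [Finset.centerMass_eq_of_sum_1 _ _ hw1] at hwc
    simp only [id_eq] at hwc
    -- each point of the image has nonpositive inner with y
    have himg : ∀ p ∈ I.image x, ⟪p, y⟫ ≤ 0 := by
      intro p hp
      obtain ⟨i, hi, rfl⟩ := Finset.mem_image.mp hp
      exact hc i hi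
    have hsum : ∑ p ∈ I.image x, w p * ⟪p, y⟫ = 0 := by
      have := congrArg (fun v => ⟪v, y⟫) hwc
      simpa [inner_sum, inner_smul_left, real_inner_smul_left, sum_inner] using this
    have hterm : ∀ p ∈ I.image x, w p * ⟪p, y⟫ = 0 := by
      have hnp : ∀ p ∈ I.image x, w p * ⟪p, y⟫ ≤ 0 := fun p hp =>
        mul_nonpos_of_nonneg_of_nonpos (hw0 p hp) (himg p hp)
      intro p hp
      exact (Finset.sum_eq_zero_iff_of_nonpos hnp).mp hsum p hp
    set J : Finset (Fin m) := I.filter (fun i => 0 < w (x i)) with hJdef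
    set P : Finset (EuclideanSpace ℝ (Fin (r+1))) := (I.image x).filter (fun p => 0 < w p) with hPdef
    have hJP : x '' (J : Set (Fin m)) = (P : Set _) := by
      ext p
      simp only [hJdef, hPdef, Set.mem_image, Finset.coe_filter, Set.mem_setOf_eq,
        Finset.mem_filter, Finset.mem_image, Finset.mem_coe]
      constructor
      · rintro ⟨i, ⟨hi, hwi⟩, rfl⟩
        exact ⟨⟨i, hi, rfl⟩, hwi⟩
      · rintro ⟨⟨i, hi, rfl⟩, hwp⟩
        exact ⟨i, ⟨hi, hwp⟩, rfl⟩
    have hsumP : ∑ p ∈ P, w p = 1 := by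
      rw [hPdef, Finset.sum_filter]
      rw [← hw1]
      apply Finset.sum_congr rfl
      intro p hp
      by_cases h : 0 < w p
      · simp [h]
      · simp [h, le_antisymm (not_lt.mp h) (hw0 p hp)]
    have hcmP : ∑ p ∈ P, w p • p = 0 := by
      rw [hPdef, Finset.sum_filter]
      conv_rhs => rw [← hwc]
      apply Finset.sum_congr rfl
      intro p hp
      by_cases h : 0 < w p
      · simp [h]
      · simp [h, le_antisymm (not_lt.mp h) (hw0 p hp)]
    have h0J : (0 : EuclideanSpace ℝ (Fin (r + 1))) ∈ convexHull ℝ (x '' (J : Set (Fin m))) := by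
      rw [hJP]
      have : P.centerMass w id ∈ convexHull ℝ (P : Set _) :=
        Finset.centerMass_mem_convexHull P (fun p hp => (Finset.mem_filter.mp hp).2.le)
          (by rw [hsumP]; norm_num) (fun p hp => hp)
      have hcmP' : ∑ p ∈ P, w p • id p = 0 := by simpa using hcmP
      rwa [Finset.centerMass_eq_of_sum_1 _ _ hsumP, hcmP'] at this
    have hspan := hnd J h0J
    -- y is orthogonal to everything in x '' J
    have horth : ∀ p ∈ x '' (J : Set (Fin m)), ⟪p, y⟫ = 0 := by
      intro p hp
      rw [hJP] at hp
      have hpP := hp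
      rw [Finset.mem_coe, hPdef, Finset.mem_filter] at hpP
      have := hterm p hpP.1
      exact (mul_eq_zero.mp this).resolve_left (ne_of_gt hpP.2) 
    have hybot : y ∈ (Submodule.span ℝ (x '' (J : Set (Fin m))))ᗮ := by
      rw [Submodule.mem_orthogonal]
      intro u hu
      induction hu using Submodule.span_induction with
      | mem p hp => exact horth p hp
      | zero => exact inner_zero_left y
      | add u v _ _ hu hv => rw [inner_add_left, hu, hv, add_zero]
      | smul c u _ hu => rw [real_inner_smul_left, hu, mul_zero]
    rw [hspan, Submodule.top_orthogonal_eq_bot, Submodule.mem_bot] at hybot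
    rw [hybot, norm_zero] at hy
    norm_num at hy
  · -- full simplex part
    intro h0 J hJI
    have hclosed : IsClosed (convexHull ℝ (x '' (I : Set (Fin m)))) :=
      (Set.Finite.isCompact_convexHull ℝ (Set.Finite.image x I.finite_toSet)).isClosed
    obtain ⟨f, u, hfu, hf⟩ := geometric_hahn_banach_point_closed (convex_convexHull ℝ _) hclosed h0
    have hf0 : f 0 = 0 := map_zero f
    have hu : 0 < u := by rw [← hf0]; exact hfu
    set v : EuclideanSpace ℝ (Fin (r + 1)) := (InnerProductSpace.toDual ℝ _).symm f with hv
    have hvz : ∀ z, ⟪v, z⟫ = f z := fun z => InnerProductSpace.toDual_symm_apply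
    by_cases hI : ∃ i, i ∈ I
    · have hvpos : ∀ i ∈ I, 0 < ⟪v, x i⟫ := by
        intro i hi
        rw [hvz]
        exact hu.trans (hf _ (subset_convexHull ℝ _ ⟨i, hi, rfl⟩))
      obtain ⟨i₀, hi₀⟩ := hI
      have hvne : v ≠ 0 := by
        intro h
        have := hvpos i₀ hi₀
        rw [h, inner_zero_left] at this
        exact lt_irrefl 0 this
      refine ⟨‖v‖⁻¹ • v, ?_, ?_⟩
      · rw [norm_smul, norm_inv, norm_norm, inv_mul_cancel₀ (norm_ne_zero_iff.mpr hvne)]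
      · intro i hi
        rw [real_inner_smul_right]
        exact mul_pos (inv_pos.mpr (norm_pos_iff.mpr hvne))
          (by rw [real_inner_comm]; exact hvpos i (hJI hi))
    · have hJempty : J = ∅ := by
        rcases Finset.eq_empty_or_nonempty J with h | ⟨j, hj⟩
        · exact h
        · exact absurd ⟨j, hJI hj⟩ hI
      refine ⟨EuclideanSpace.single 0 1, ?_, ?_⟩
      · rw [EuclideanSpace.norm_single]; norm_num
      · simp [hJempty]
end

section
/- Color the nonzero vectors of Z_2^k with k - 1 colors arbitrarily (k ≥ 1). Then there exists a minimal linear dependence {a_1, ..., a_{2r+1}} ⊆ Z_2^k \ {0} with an odd number of elements, all of the same color. (Equivalently: there is no proper coloring of Z_2^k \ {0} by k-1 colors, where proper means no odd minimal linear dependence is monochromatic.) -/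
/-- `A` is a minimal linear dependence in `(Z_2)^k`: a set of distinct nonzero vectors
summing to `0`, every proper subset of which is linearly independent over `Z_2`
(equivalently, no nonempty proper subset sums to `0`). -/
def MinLinDep {k : ℕ} (A : Finset (Fin k → ZMod 2)) : Prop :=
  (∀ a ∈ A, a ≠ 0) ∧ (∑ a ∈ A, a) = 0 ∧
    ∀ B ⊆ A, B.Nonempty → B ≠ A → (∑ b ∈ B, b) ≠ 0

lemma vec_add_self {k : ℕ} (x : Fin k → ZMod 2) : x + x = 0 := by
  funext i
  exact CharTwo.add_self_eq_zero (x i)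

lemma exists_odd_minlindep {k : ℕ} (T : Finset (Fin k → ZMod 2))
    (h0 : ∀ a ∈ T, a ≠ 0) (hsum : ∑ a ∈ T, a = 0) (hodd : Odd T.card) :
    ∃ A ⊆ T, MinLinDep A ∧ Odd A.card := by
  induction T using Finset.strongInductionOn with
  | _ T ih =>
  by_cases hmin : ∀ B ⊆ T, B.Nonempty → B ≠ T → (∑ b ∈ B, b) ≠ 0
  · exact ⟨T, le_refl _, ⟨h0, hsum, hmin⟩, hodd⟩
  · push_neg at hmin
    obtain ⟨B, hBT, hBne, hBneq, hB0⟩ := hmin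
    have hBssub : B ⊂ T := lt_of_le_of_ne hBT hBneq
    have hcard : (T \ B).card + B.card = T.card := by
      have := Finset.card_le_card hBT
      rw [Finset.card_sdiff_of_subset hBT]; omega
    rcases Nat.even_or_odd B.card with hev | hod
    · -- recurse on T \ B
      have hsd : (T \ B) ⊂ T := by
        apply Finset.sdiff_ssubset hBT hBne
      have hsdsum : ∑ a ∈ T \ B, a = 0 := by
        have := Finset.sum_sdiff hBT (f := fun a => a)
        rw [hB0, add_zero] at this
        rw [this, hsum]
      have hsdodd : Odd (T \ B).card := by
        rw [Finset.card_sdiff_of_subset hBT] at *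
        rcases hodd with ⟨m, hm⟩
        rcases hev with ⟨n, hn⟩
        have := Finset.card_le_card hBT
        refine ⟨m - n, by omega⟩
      obtain ⟨A, hA, hA2, hA3⟩ := ih _ hsd (fun a ha => h0 a (Finset.mem_sdiff.mp ha).1) hsdsum hsdodd
      exact ⟨A, hA.trans (Finset.sdiff_subset), hA2, hA3⟩
    · obtain ⟨A, hA, hA2, hA3⟩ := ih B hBssub (fun a ha => h0 a (hBT ha)) hB0 hod
      exact ⟨A, hA.trans hBT, hA2, hA3⟩

lemma zmod2_smul {k : ℕ} (c : ZMod 2) (x : Fin k → ZMod 2) :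
    c • x = if c = 1 then x else 0 := by
  fin_cases c
  · show (0 : ZMod 2) • x = if (0 : ZMod 2) = 1 then x else 0
    simp
  · show (1 : ZMod 2) • x = if (1 : ZMod 2) = 1 then x else 0
    simp

lemma nat_smul_vec {k : ℕ} (n : ℕ) (x : Fin k → ZMod 2) :
    n • x = if Odd n then x else 0 := by
  have h : n • x = ((n : ZMod 2)) • x := (Nat.cast_smul_eq_nsmul (ZMod 2) n x).symm
  rw [h]
  rcases Nat.even_or_odd n with he | ho
  · have : (n : ZMod 2) = 0 := by
      rw [← ZMod.natCast_mod, Nat.even_iff.mp he]; simp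
    simp [this, Nat.odd_iff, Nat.even_iff.mp he]
  · have : (n : ZMod 2) = 1 := by
      rw [← ZMod.natCast_mod, Nat.odd_iff.mp ho]; simp
    simp [this, ho]

lemma exists_functional {k : ℕ} (S : Finset (Fin k → ZMod 2))
    (h : ∀ T ⊆ S, T.Nonempty → Odd T.card → (∑ a ∈ T, a) ≠ 0) :
    ∃ f : (Fin k → ZMod 2) →ₗ[ZMod 2] ZMod 2, ∀ s ∈ S, f s = 1 := by
  rcases S.eq_empty_or_nonempty with rfl | ⟨s₀, hs₀⟩
  · exact ⟨0, by simp⟩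
  set E : Submodule (ZMod 2) (Fin k → ZMod 2) :=
    Submodule.span (ZMod 2) ↑(S.image (· + s₀)) with hE
  have hs₀E : s₀ ∉ E := by
    intro hmem
    rw [hE, Submodule.mem_span_finset] at hmem
    obtain ⟨g, -, hg⟩ := hmem
    -- rewrite the sum over the image as a sum over S
    have hinj : ∀ x ∈ S, ∀ y ∈ S, x + s₀ = y + s₀ → x = y := by
      intro x _ y _ hxy
      have := congrArg (· + s₀) hxy
      simpa [add_assoc, vec_add_self] using hxy
    have hsum' : ∑ s ∈ S, g (s + s₀) • (s + s₀) = s₀ := by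
      rw [Finset.sum_image hinj] at hg; exact hg
    set B := S.filter (fun s => g (s + s₀) = 1) with hB
    have hsum'' : ∑ s ∈ B, (s + s₀) = s₀ := by
      have heq : ∑ s ∈ B, (s + s₀) = ∑ s ∈ S, g (s + s₀) • (s + s₀) := by
        rw [hB, Finset.sum_filter]
        apply Finset.sum_congr rfl
        intro s _
        by_cases hgs : g (s + s₀) = 1
        · rw [if_pos hgs, hgs, one_smul]
        · rw [if_neg hgs]
          have h0 : g (s + s₀) = 0 := by
            have : ∀ c : ZMod 2, c ≠ 1 → c = 0 := by decide
            exact this _ hgs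
          rw [h0, zero_smul]
      rw [heq, hsum']
    have hsplit : ∑ s ∈ B, (s + s₀) = (∑ s ∈ B, s) + B.card • s₀ := by
      rw [Finset.sum_add_distrib, Finset.sum_const]
    rcases Nat.even_or_odd B.card with hev | hod
    · -- sum B = s₀
      have hBsum : ∑ s ∈ B, s = s₀ := by
        rw [hsplit, nat_smul_vec] at hsum''
        simpa [Nat.odd_iff, Nat.even_iff.mp hev] using hsum''
      by_cases hs₀B : s₀ ∈ B
      · -- T = B.erase s₀ : odd card, sum zero
        set T := B.erase s₀ with hT
        have hTsum : ∑ s ∈ T, s = 0 := by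
          have h1 : (∑ s ∈ T, s) + s₀ = ∑ s ∈ B, s := Finset.sum_erase_add B _ hs₀B
          rw [hBsum] at h1
          have h2 : (∑ s ∈ T, s) + s₀ + s₀ = s₀ + s₀ := by rw [h1]
          rwa [add_assoc, vec_add_self, add_zero] at h2
        have hTcard : Odd T.card := by
          rw [hT, Finset.card_erase_of_mem hs₀B]
          have h1 : 1 ≤ B.card := Finset.card_pos.mpr ⟨s₀, hs₀B⟩
          rcases hev with ⟨m, hm⟩
          exact ⟨m - 1, by omega⟩
        have hTne : T.Nonempty := Finset.card_pos.mp (by rcases hTcard with ⟨m,hm⟩; omega)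
        exact h T ((Finset.erase_subset _ _).trans (Finset.filter_subset _ _)) hTne hTcard hTsum
      · -- T = insert s₀ B
        set T := insert s₀ B with hT
        have hTsum : ∑ s ∈ T, s = 0 := by
          rw [hT, Finset.sum_insert hs₀B, hBsum, vec_add_self]
        have hTcard : Odd T.card := by
          rw [hT, Finset.card_insert_of_notMem hs₀B]
          rcases hev with ⟨m, hm⟩
          exact ⟨m, by omega⟩
        exact h T (Finset.insert_subset hs₀ (Finset.filter_subset _ _))
          ⟨s₀, Finset.mem_insert_self _ _⟩ hTcard hTsum
    · -- B itself odd, sum zero? no: hsum'' gives ∑ B s + s₀ = s₀ hence ∑ B = 0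
      have hBsum : ∑ s ∈ B, s = 0 := by
        rw [hsplit, nat_smul_vec, if_pos hod] at hsum''
        have := congrArg (· + s₀) hsum''
        simpa [add_assoc, vec_add_self] using this
      have hBne : B.Nonempty := Finset.card_pos.mp (by rcases hod with ⟨m,hm⟩; omega)
      exact h B (Finset.filter_subset _ _) hBne hod hBsum
  obtain ⟨φ, hφ⟩ : ∃ φ : Module.Dual (ZMod 2) ((Fin k → ZMod 2) ⧸ E), φ (E.mkQ s₀) ≠ 0 := by
    by_contra hc
    push_neg at hc
    have h0 : E.mkQ s₀ = 0 := (Module.forall_dual_apply_eq_zero_iff (ZMod 2) _).mp hc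
    rw [Submodule.mkQ_apply, Submodule.Quotient.mk_eq_zero] at h0
    exact hs₀E h0
  have hφ1 : φ (E.mkQ s₀) = 1 := by
    have : ∀ c : ZMod 2, c ≠ 0 → c = 1 := by decide
    exact this _ hφ
  refine ⟨φ.comp E.mkQ, ?_⟩
  intro s hs
  have hmem : s + s₀ ∈ E :=
    Submodule.subset_span (Finset.mem_coe.mpr (Finset.mem_image.mpr ⟨s, hs, rfl⟩))
  have hmk : E.mkQ s = E.mkQ s₀ := by
    rw [← sub_eq_zero, ← map_sub]
    have hss : s - s₀ = s + s₀ := by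
      rw [sub_eq_add_neg]
      congr 1
      funext i
      exact CharTwo.neg_eq (s₀ i)
    rw [hss, Submodule.mkQ_apply, Submodule.Quotient.mk_eq_zero]
    exact hmem
  rw [LinearMap.comp_apply, hmk, hφ1]

/-- There is no proper coloring of `(Z_2)^k \ {0}` by `k - 1` colors: for any coloring
of the nonzero vectors of `(Z_2)^k` with `k - 1` colors there exists a monochromatic
minimal linear dependence with an odd number of elements. -/
theorem no_proper_coloring_with_fewer_colors {k : ℕ} (hk : 1 ≤ k)
    (ρ : {v : Fin k → ZMod 2 // v ≠ 0} → Fin (k - 1)) :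
    ∃ A : Finset (Fin k → ZMod 2), MinLinDep A ∧ Odd A.card ∧
      ∃ c : Fin (k - 1), ∀ a : {v : Fin k → ZMod 2 // v ≠ 0},
        (a : Fin k → ZMod 2) ∈ A → ρ a = c := by
  classical
  by_contra hcon
  push_neg at hcon
  set S : Fin (k-1) → Finset (Fin k → ZMod 2) := fun c =>
    Finset.univ.filter (fun v => ∃ hv : v ≠ 0, ρ ⟨v, hv⟩ = c) with hS
  have hfun : ∀ c, ∃ f : (Fin k → ZMod 2) →ₗ[ZMod 2] ZMod 2, ∀ s ∈ S c, f s = 1 := by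
    intro c
    apply exists_functional
    intro T hTS hTne hTodd hT0
    obtain ⟨A, hAT, hAmin, hAodd⟩ := exists_odd_minlindep T
      (fun a ha => by
        have h1 := hTS ha
        simp only [hS, Finset.mem_filter] at h1
        exact h1.2.1) hT0 hTodd
    obtain ⟨a, haA, hane⟩ := hcon A hAmin hAodd c
    have h1 : (a : Fin k → ZMod 2) ∈ S c := hTS (hAT haA)
    simp only [hS, Finset.mem_filter] at h1
    obtain ⟨_, hv, hrc⟩ := h1
    have h2 : (⟨(a : Fin k → ZMod 2), hv⟩ : {v : Fin k → ZMod 2 // v ≠ 0}) = a :=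
      Subtype.ext rfl
    exact hane (h2 ▸ hrc)
  choose f hf using hfun
  set F : (Fin k → ZMod 2) →ₗ[ZMod 2] (Fin (k-1) → ZMod 2) := LinearMap.pi f with hF
  have hFnotinj : ¬ Function.Injective F := by
    intro hinj
    have h1 := LinearMap.finrank_le_finrank_of_injective hinj
    rw [Module.finrank_fin_fun, Module.finrank_fin_fun] at h1
    omega
  have hker : LinearMap.ker F ≠ ⊥ := fun hb => hFnotinj (LinearMap.ker_eq_bot.mp hb)
  obtain ⟨v, hvker, hv0⟩ := Submodule.exists_mem_ne_zero_of_ne_bot hker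
  have hmem : v ∈ S (ρ ⟨v, hv0⟩) := by
    simp only [hS, Finset.mem_filter]
    exact ⟨Finset.mem_univ _, hv0, by trivial⟩
  have h1 : f (ρ ⟨v, hv0⟩) v = 1 := hf _ v hmem
  have h0 : f (ρ ⟨v, hv0⟩) v = 0 := by
    have := LinearMap.mem_ker.mp hvker
    have h2 := congrFun this (ρ ⟨v, hv0⟩)
    simpa [hF, LinearMap.pi_apply] using h2
  rw [h1] at h0
  exact one_ne_zero h0
end

section
/- If a finite multiset of points X on the circle S^1 ⊂ R^2 is placed at the vertices of a regular (2k+1)-gon (k ≥ 2, each vertex with multiplicity 1, m = 2k+1), then any k+1 consecutive points lie in a common open half-plane through the origin (hence form a simplex of the constellation complex Δ(X)), while any set of indices whose points do not fit in k+1 consecutive positions contains points x_i, x_j with 0 ∈ conv of some subset, i.e. the maximal simplices of Δ(X) are exactly the sets of k+1 consecutive vertices. -/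
open scoped RealInnerProductSpace

/-- The `j`-th vertex of the regular `(2k+1)`-gon inscribed in the unit circle
`S^1 ⊂ ℝ^2`. -/
noncomputable def polygonPt (k : ℕ) (j : Fin (2 * k + 1)) : EuclideanSpace ℝ (Fin 2) :=
  (WithLp.equiv 2 (Fin 2 → ℝ)).symm
    ![Real.cos (2 * Real.pi * (j : ℕ) / (2 * k + 1)),
      Real.sin (2 * Real.pi * (j : ℕ) / (2 * k + 1))]

lemma inner_eq_cos (k : ℕ) (φ : ℝ) (y : EuclideanSpace ℝ (Fin 2))
    (h0 : y 0 = Real.cos φ) (h1 : y 1 = Real.sin φ) (j : Fin (2*k+1)) :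
    ⟪y, polygonPt k j⟫ = Real.cos (2 * Real.pi * (j:ℕ) / (2*k+1) - φ) := by
  simp [polygonPt, PiLp.inner_apply, Fin.sum_univ_two, RCLike.inner_apply, h0, h1,
    Real.cos_sub, PiLp.toLp_apply]

lemma norm_cs (φ : ℝ) :
    ‖((WithLp.equiv 2 (Fin 2 → ℝ)).symm ![Real.cos φ, Real.sin φ] : EuclideanSpace ℝ (Fin 2))‖ = 1 := by
  rw [EuclideanSpace.norm_eq]
  simp [Fin.sum_univ_two, PiLp.toLp_apply, sq_abs]

lemma cos_pos_exists {x : ℝ} (h : 0 < Real.cos x) :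
    ∃ n : ℤ, |x - 2 * Real.pi * n| < Real.pi / 2 := by
  set n := round (x / (2 * Real.pi)) with hn
  refine ⟨n, ?_⟩
  have hpi := Real.pi_pos
  have hr : |x / (2 * Real.pi) - n| ≤ 1 / 2 := abs_sub_round _
  have hb : |x - 2 * Real.pi * n| ≤ Real.pi := by
    have h2 : x - 2 * Real.pi * n = (2 * Real.pi) * (x / (2 * Real.pi) - n) := by
      field_simp
    rw [h2, abs_mul, abs_of_pos (by linarith : (0:ℝ) < 2 * Real.pi)]
    nlinarith [hr]
  have hcos : Real.cos (x - 2 * Real.pi * n) = Real.cos x := by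
    rw [show x - 2 * Real.pi * n = x - n * (2 * Real.pi) by ring,
      Real.cos_sub_int_mul_two_pi]
  set u := x - 2 * Real.pi * n with hu
  rw [abs_le] at hb
  by_contra hc
  rw [not_lt, le_abs] at hc
  rcases hc with hc | hc
  · have : Real.cos u ≤ 0 :=
      Real.cos_nonpos_of_pi_div_two_le_of_le hc (by linarith)
    linarith [hcos ▸ this]
  · have : Real.cos (-u) ≤ 0 :=
      Real.cos_nonpos_of_pi_div_two_le_of_le hc (by linarith)
    rw [Real.cos_neg, hcos] at this
    linarith

/-- For the configuration `X` of the vertices of a regular `(2k+1)`-gon on `S^1`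
(`k ≥ 2`), a set of indices `I` is a simplex of the constellation complex `Δ(X)`
(i.e. the points `x_i`, `i ∈ I`, lie in a common open half-plane through the origin)
if and only if `I` is contained in a set of `k + 1` cyclically consecutive indices.
In particular, the maximal simplices of `Δ(X)` are exactly the sets of `k + 1`
consecutive vertices. -/
theorem polygon_constellation_simplices (k : ℕ) (hk : 2 ≤ k)
    (I : Finset (Fin (2 * k + 1))) :
    (∃ y : EuclideanSpace ℝ (Fin 2), ‖y‖ = 1 ∧ ∀ i ∈ I, 0 < ⟪y, polygonPt k i⟫) ↔
      (∃ s : Fin (2 * k + 1), ∀ i ∈ I, ∃ t : Fin (2 * k + 1),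
        (t : ℕ) ≤ k ∧ i = s + t) := by
  have hpi := Real.pi_pos
  have hm : (0:ℝ) < 2 * k + 1 := by positivity
  constructor
  · rintro ⟨y, hy, hpos⟩
    -- extract angle φ
    set z : ℂ := ⟨y 0, y 1⟩ with hz
    have h2 : (y 0)^2 + (y 1)^2 = 1 := by
      rw [EuclideanSpace.norm_eq] at hy
      simp only [Fin.sum_univ_two, Real.norm_eq_abs, sq_abs] at hy
      nlinarith [Real.sq_sqrt (show (0:ℝ) ≤ (y 0)^2 + (y 1)^2 by positivity), hy]
    have habs : ‖z‖ = 1 := by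
      rw [Complex.norm_def, Complex.normSq_mk]
      rw [show y 0 * y 0 + y 1 * y 1 = (y 0)^2 + (y 1)^2 by ring, h2, Real.sqrt_one]
    have hz0 : z ≠ 0 := by
      intro h; rw [h] at habs; simp at habs
    set φ := Complex.arg z with hφ
    have hc : y 0 = Real.cos φ := by
      rw [hφ, Complex.cos_arg hz0, habs]; simp [hz]
    have hsin : y 1 = Real.sin φ := by
      rw [hφ, Complex.sin_arg, habs]; simp [hz]
    set a : ℝ := (2*k+1) * φ / (2*Real.pi) - (2*k+1)/4 with ha
    set q : ℤ := ⌊a⌋ with hq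
    set s0 : ℤ := q + 1 with hs0
    clear_value z
    have h0 : 0 ≤ s0 % (2*k+1 : ℤ) := Int.emod_nonneg _ (by positivity)
    have hlt : s0 % (2*k+1 : ℤ) < (2*k+1 : ℤ) := Int.emod_lt_of_pos _ (by positivity)
    have hS : (s0 % (2*k+1 : ℤ)).toNat < 2*k+1 := by omega
    refine ⟨⟨(s0 % (2*k+1 : ℤ)).toNat, hS⟩, ?_⟩
    intro i hi
    have hp := hpos i hi
    rw [inner_eq_cos k φ y hc hsin] at hp
    obtain ⟨n, hn⟩ := cos_pos_exists hp
    have key : 2*Real.pi*(i:ℕ)/(2*k+1) - φ - 2*Real.pi*n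
        = (2*Real.pi/(2*k+1)) * ((i:ℕ) - n*(2*k+1) - a - (2*k+1)/4) := by
      rw [ha]; field_simp; ring
    rw [key, abs_mul, abs_of_pos (by positivity), div_mul_eq_mul_div,
      div_lt_iff₀ hm] at hn
    have hE : |(i:ℕ) - n*(2*k+1) - a - (2*k+1)/4| < (2*k+1)/4 := by
      nlinarith [hn, hpi]
    rw [abs_lt] at hE
    have hfl : (q:ℝ) ≤ a := hq ▸ Int.floor_le a
    have hfu : a < q + 1 := hq ▸ Int.lt_floor_add_one a
    clear_value s0 q a
    set t' : ℤ := (i : ℕ) - n*(2*k+1) - s0 with ht'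
    clear_value t'
    have h1 : 0 ≤ t' := by
      have hr : (q:ℝ) < (i:ℕ) - n*(2*k+1) := by linarith [hE.1]
      have hr' : (q:ℤ) < (i : ℕ) - n*(2*k+1) := by exact_mod_cast hr
      omega
    have h2' : t' ≤ k := by
      have hr : ((i:ℕ) : ℝ) - n*(2*k+1) < ((q + k + 2 : ℤ) : ℝ) := by
        push_cast; linarith [hE.2]
      have hr' : ((i:ℕ) : ℤ) - n*(2*k+1) < (q + k + 2 : ℤ) := by exact_mod_cast hr
      omega
    refine ⟨⟨t'.toNat, by omega⟩, show t'.toNat ≤ k by omega, ?_⟩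
    · apply Fin.ext
      rw [Fin.val_add]
      have hint : (((s0 % (2*k+1:ℤ)).toNat + t'.toNat : ℕ) : ℤ) % (2*k+1) = ((i:ℕ) : ℤ) := by
        push_cast [Int.toNat_of_nonneg h0, Int.toNat_of_nonneg h1]
        rw [Int.add_emod, Int.emod_emod_of_dvd _ dvd_rfl, ← Int.add_emod]
        rw [show s0 + t' = ((i:ℕ):ℤ) + (2*k+1)*(-n) by rw [ht']; ring,
          Int.add_mul_emod_self_left, Int.emod_eq_of_lt (by positivity) (by exact_mod_cast i.isLt)]
      exact_mod_cast hint.symm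
  · rintro ⟨s, hs⟩
    set φ : ℝ := 2*Real.pi*(s:ℕ)/(2*k+1) + Real.pi*k/(2*k+1) with hφ
    refine ⟨(WithLp.equiv 2 (Fin 2 → ℝ)).symm ![Real.cos φ, Real.sin φ], norm_cs φ, ?_⟩
    intro i hi
    obtain ⟨t, ht, rfl⟩ := hs i hi
    rw [inner_eq_cos k φ _ (by simp) (by simp)]
    have hv : (((s + t : Fin (2*k+1)) : ℕ)) = ((s:ℕ) + (t:ℕ)) % (2*k+1) := Fin.val_add s t
    set d : ℕ := ((s:ℕ) + (t:ℕ)) / (2*k+1) with hd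
    have hmodR : ((((s:ℕ) + (t:ℕ)) % (2*k+1) : ℕ) : ℝ) = (s:ℕ) + (t:ℕ) - (2*k+1)*d := by
      have h := Nat.mod_add_div ((s:ℕ) + (t:ℕ)) (2*k+1)
      have h' : ((((s:ℕ)+(t:ℕ)) % (2*k+1) : ℕ) : ℝ) + (2*k+1)*d = (s:ℕ) + (t:ℕ) := by
        exact_mod_cast congrArg (Nat.cast : ℕ → ℝ) h
      linarith
    rw [hv]
    rw [show 2*Real.pi*((((s:ℕ) + (t:ℕ)) % (2*k+1) : ℕ) : ℝ)/(2*k+1) - φ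
        = Real.pi*(2*(t:ℕ) - k)/(2*k+1) - (d:ℤ)*(2*Real.pi) by
      rw [hmodR, hφ]; push_cast; field_simp; ring]
    rw [Real.cos_sub_int_mul_two_pi]
    apply Real.cos_pos_of_mem_Ioo
    have htR : ((t:ℕ) : ℝ) ≤ k := by exact_mod_cast ht
    have htR0 : (0:ℝ) ≤ ((t:ℕ) : ℝ) := by positivity
    constructor
    · rw [lt_div_iff₀ hm]
      nlinarith
    · rw [div_lt_div_iff₀ hm two_pos]
      nlinarith
end
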